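/- Let G be the subgroup of the 3×3 integer Heisenberg group consisting of upper unitriangular matrices whose (1,2)-entry is even. Then the abelianization of G is isomorphic to ℤ² ⊕ ℤ/2ℤ. -/

import Mathlib

/-- The integer Heisenberg group: 3×3 upper unitriangular integer matrices
`[[1, a, c], [0, 1, b], [0, 0, 1]]`, recorded by their entries `a` (the
(1,2)-entry), `b` (the (2,3)-entry) and `c` (the (1,3)-entry), with the group
law given by matrix multiplication. -/
structure Heisenberg where
  a : ℤ
  b : ℤ
  c : ℤ

namespace Heisenberg

instance : Mul Heisenberg :=
  ⟨fun x y => ⟨x.a + y.a, x.b + y.b, x.c + y.c + x.a * y.b⟩⟩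

instance : One Heisenberg := ⟨⟨0, 0, 0⟩⟩

instance : Inv Heisenberg := ⟨fun x => ⟨-x.a, -x.b, x.a * x.b - x.c⟩⟩

lemma mul_def (x y : Heisenberg) :
    x * y = ⟨x.a + y.a, x.b + y.b, x.c + y.c + x.a * y.b⟩ := rfl

lemma one_def : (1 : Heisenberg) = ⟨0, 0, 0⟩ := rfl

lemma inv_def (x : Heisenberg) : x⁻¹ = ⟨-x.a, -x.b, x.a * x.b - x.c⟩ := rfl

instance : Group Heisenberg where
  mul_assoc x y z := by
    simp only [mul_def, mk.injEq]
    refine ⟨by ring, by ring, by ring⟩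
  one_mul x := by
    cases x
    simp only [mul_def, one_def, mk.injEq]
    refine ⟨by ring, by ring, by ring⟩
  mul_one x := by
    cases x
    simp only [mul_def, one_def, mk.injEq]
    refine ⟨by ring, by ring, by ring⟩
  inv_mul_cancel x := by
    cases x
    simp only [mul_def, inv_def, one_def, mk.injEq]
    refine ⟨by ring, by ring, by ring⟩

/-- The index-2 subgroup of the Heisenberg group consisting of the matrices
whose (1,2)-entry is even. -/
def evenSubgroup : Subgroup Heisenberg where
  carrier := {x | Even x.a}
  one_mem' := ⟨0, rfl⟩
  mul_mem' := by
    rintro x y ⟨r, hr⟩ ⟨s, hs⟩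
    exact ⟨r + s, by show x.a + y.a = _; omega⟩
  inv_mem' := by
    rintro x ⟨r, hr⟩
    exact ⟨-r, by show -x.a = _; omega⟩

end Heisenberg


namespace Heisenberg

/-- The projection hom from the even subgroup. -/
def proj : evenSubgroup →* Multiplicative (ℤ × ℤ × ZMod 2) where
  toFun x := Multiplicative.ofAdd ((x : Heisenberg).a / 2, (x : Heisenberg).b,
    ((x : Heisenberg).c : ZMod 2))
  map_one' := by
    refine congrArg Multiplicative.ofAdd ?_
    show ((0 : ℤ) / 2, (0 : ℤ), (((0 : ℤ)) : ZMod 2)) = ((0 : ℤ), (0 : ℤ), (0 : ZMod 2))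
    norm_num
  map_mul' x y := by
    obtain ⟨r, hr⟩ := x.2
    obtain ⟨s, hs⟩ := y.2
    have hmul : ((x * y : evenSubgroup) : Heisenberg) = (x : Heisenberg) * y := rfl
    simp only [hmul, mul_def]
    have h1 : ((x : Heisenberg).a + (y : Heisenberg).a) / 2
        = (x : Heisenberg).a / 2 + (y : Heisenberg).a / 2 := by omega
    have h2 : (((x : Heisenberg).c + (y : Heisenberg).c
        + (x : Heisenberg).a * (y : Heisenberg).b : ℤ) : ZMod 2)
        = ((x : Heisenberg).c : ZMod 2) + ((y : Heisenberg).c : ZMod 2) := by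
      have h : (x : Heisenberg).a = 2 * r := by omega
      have h2 : (2 : ZMod 2) = 0 := rfl
      push_cast [h]
      rw [h2]
      ring
    refine Prod.ext h1 (Prod.ext rfl h2)

lemma proj_surjective : Function.Surjective proj := by
  rintro ⟨m, n, c⟩
  refine ⟨⟨⟨2 * m, n, (c.val : ℤ)⟩, ⟨m, by show 2 * m = m + m; ring⟩⟩, ?_⟩
  refine congrArg Multiplicative.ofAdd (Prod.ext ?_ (Prod.ext rfl ?_))
  · show (2 * m) / 2 = m
    omega
  · show (((c.val : ℤ)) : ZMod 2) = c
    push_cast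
    simp [ZMod.natCast_val, ZMod.cast_id]

open scoped commutatorElement in
lemma mem_commutator_of_proj_eq_one (x : evenSubgroup) (hx : proj x = 1) :
    x ∈ commutator evenSubgroup := by
  obtain ⟨r, hr⟩ := x.2
  have hx' : ((x : Heisenberg).a / 2, (x : Heisenberg).b,
      ((x : Heisenberg).c : ZMod 2)) = ((0 : ℤ), (0 : ℤ), (0 : ZMod 2)) := hx
  simp only [Prod.mk.injEq] at hx'
  obtain ⟨ha, hb, hc⟩ := hx'
  have ha0 : (x : Heisenberg).a = 0 := by omega
  have hc2 : (2 : ℤ) ∣ (x : Heisenberg).c := by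
    have := (ZMod.intCast_zmod_eq_zero_iff_dvd _ 2).mp hc
    exact_mod_cast this
  obtain ⟨k, hk⟩ := hc2
  -- x = ⁅u, v⁆ with u = (2,0,0), v = (0,k,0)
  set u : evenSubgroup := ⟨⟨2, 0, 0⟩, ⟨1, by norm_num⟩⟩
  set v : evenSubgroup := ⟨⟨0, k, 0⟩, ⟨0, by norm_num⟩⟩
  have hxuv : x = ⁅u, v⁆ := by
    have : (⁅u, v⁆ : evenSubgroup) = ⟨⟨0, 0, 2 * k⟩, ⟨0, by norm_num⟩⟩ := by
      apply Subtype.ext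
      show ((u : Heisenberg) * v * (u : Heisenberg)⁻¹ * (v : Heisenberg)⁻¹)
        = (⟨0, 0, 2 * k⟩ : Heisenberg)
      simp only [mul_def, inv_def]
      refine mk.injEq .. ▸ ⟨by ring, by ring, by ring⟩
    rw [this]
    apply Subtype.ext
    obtain ⟨⟨a, b, c⟩, hm⟩ := x
    simp only at ha0 hb hk
    show (⟨a, b, c⟩ : Heisenberg) = ⟨0, 0, 2 * k⟩
    rw [ha0, hb, hk]
  rw [hxuv, commutator]
  exact Subgroup.commutator_mem_commutator (Subgroup.mem_top u) (Subgroup.mem_top v)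

end Heisenberg

theorem stmt_18 :
    Nonempty (Abelianization Heisenberg.evenSubgroup ≃*
      Multiplicative (ℤ × ℤ × ZMod 2)) := by
  refine ⟨MulEquiv.ofBijective (Abelianization.lift Heisenberg.proj) ⟨?_, ?_⟩⟩
  · rw [injective_iff_map_eq_one]
    intro z hz
    obtain ⟨x, rfl⟩ := QuotientGroup.mk'_surjective (commutator Heisenberg.evenSubgroup) z
    have hz' : Heisenberg.proj x = 1 := by
      rw [show (QuotientGroup.mk' (commutator Heisenberg.evenSubgroup) x : _)
        = Abelianization.of x from rfl, Abelianization.lift_apply_of] at hz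
      exact hz
    have := Heisenberg.mem_commutator_of_proj_eq_one x hz'
    exact (QuotientGroup.eq_one_iff x).mpr this
  · intro y
    obtain ⟨x, hx⟩ := Heisenberg.proj_surjective y
    exact ⟨Abelianization.of x, by rw [Abelianization.lift_apply_of, hx]⟩
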